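/- Let k be a natural number, let p₁,…,p_k be distinct primes and n = p₁⋯p_k. Then the hyper-Wiener index of the k-dprime divisor function graph Γ_k equals 2^{k−1}·(2^{k+1} + 2^k + 1) − 2·3^k. -/

import Mathlib

/-- The `k`-dprime divisor function graph on the positive divisors of `n`:
two distinct divisors `u`, `v` are adjacent iff `u ∣ v` or `v ∣ u`. -/
def divisorGraph (n : ℕ) : SimpleGraph {d : ℕ // d ∈ n.divisors} where
  Adj u v := u ≠ v ∧ ((u : ℕ) ∣ (v : ℕ) ∨ (v : ℕ) ∣ (u : ℕ))
  symm := ⟨fun _ _ ⟨h, hd⟩ => ⟨h.symm, hd.symm⟩⟩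
  loopless := ⟨fun _ ⟨h, _⟩ => h rfl⟩

instance (n : ℕ) : DecidableRel (divisorGraph n).Adj :=
  fun _ _ => instDecidableAnd

open ArithmeticFunction Finset in
lemma aux_pair {k : ℕ} {p : Fin k → ℕ} (hp : ∀ i, (p i).Prime)
    (hinj : Function.Injective p) :
    ((Finset.univ : Finset (Fin k)) : Set (Fin k)).Pairwise (Function.onFun Nat.Coprime p) :=
  fun i _ j _ hij => (Nat.coprime_primes (hp i) (hp j)).mpr (fun h => hij (hinj h))

open ArithmeticFunction Finset in
lemma aux_card {k : ℕ} {p : Fin k → ℕ} (hp : ∀ i, (p i).Prime)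
    (hinj : Function.Injective p) {n : ℕ} (hn : n = ∏ i, p i) :
    n.divisors.card = 2 ^ k := by
  have h := isMultiplicative_sigma (k := 0) |>.map_prod p Finset.univ (aux_pair hp hinj)
  rw [← hn, sigma_zero_apply] at h
  have hval : ∀ i : Fin k, sigma 0 (p i) = 2 := fun i => by
    rw [sigma_zero_apply, (hp i).divisors]
    rw [Finset.card_insert_of_notMem (by simp [(hp i).one_lt.ne']; exact (hp i).one_lt.ne)]
    simp
  rw [h, Finset.prod_congr rfl (fun i _ => hval i), Finset.prod_const, Finset.card_univ,
    Fintype.card_fin]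

open ArithmeticFunction Finset in
lemma aux_T3 {k : ℕ} {p : Fin k → ℕ} (hp : ∀ i, (p i).Prime)
    (hinj : Function.Injective p) {n : ℕ} (hn : n = ∏ i, p i) :
    ∑ v ∈ n.divisors, v.divisors.card = 3 ^ k := by
  have hmul : (sigma 0 * zeta).IsMultiplicative :=
    isMultiplicative_sigma.mul isMultiplicative_zeta
  have h := hmul.map_prod p Finset.univ (aux_pair hp hinj)
  rw [← hn, mul_zeta_apply] at h
  have hval : ∀ i : Fin k, (sigma 0 * zeta) (p i) = 3 := fun i => by
    rw [mul_zeta_apply, (hp i).divisors]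
    rw [Finset.sum_insert (by simp [(hp i).one_lt.ne']; exact (hp i).one_lt.ne)]
    rw [Finset.sum_singleton, sigma_zero_apply, sigma_zero_apply, (hp i).divisors,
      Nat.divisors_one]
    rw [Finset.card_insert_of_notMem (by simp [(hp i).one_lt.ne']; exact (hp i).one_lt.ne)]
    simp
  have h2 : ∑ v ∈ n.divisors, v.divisors.card = ∑ v ∈ n.divisors, sigma 0 v :=
    Finset.sum_congr rfl fun v _ => (sigma_zero_apply v).symm
  rw [h2, h, Finset.prod_congr rfl (fun i _ => hval i), Finset.prod_const, Finset.card_univ,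
    Fintype.card_fin]

lemma aux_dist {n : ℕ} (hn0 : n ≠ 0) (u v : {d : ℕ // d ∈ n.divisors}) :
    ((divisorGraph n).dist u v : ℚ) + ((divisorGraph n).dist u v : ℚ) ^ 2 =
    if (u : ℕ) = (v : ℕ) then 0 else
      if ((u : ℕ) ∣ (v : ℕ) ∨ (v : ℕ) ∣ (u : ℕ)) then 2 else 6 := by
  by_cases hev : (u : ℕ) = (v : ℕ)
  · have h : u = v := Subtype.ext hev
    subst h; simp [SimpleGraph.dist_self]
  have hne : u ≠ v := fun h => hev (congrArg _ h)
  by_cases hd : ((u : ℕ) ∣ (v : ℕ) ∨ (v : ℕ) ∣ (u : ℕ))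
  · have hadj : (divisorGraph n).Adj u v := ⟨hne, hd⟩
    have h1 : (divisorGraph n).dist u v = 1 := SimpleGraph.dist_eq_one_iff_adj.mpr hadj
    rw [h1]; simp [hev, hd]; norm_num
  · have hu : (u : ℕ) ∣ n := (Nat.mem_divisors.mp u.2).1
    have hg1 : Nat.gcd (u : ℕ) (v : ℕ) ∣ (u : ℕ) := Nat.gcd_dvd_left _ _
    have hg2 : Nat.gcd (u : ℕ) (v : ℕ) ∣ (v : ℕ) := Nat.gcd_dvd_right _ _
    set g : {d : ℕ // d ∈ n.divisors} :=
      ⟨Nat.gcd (u : ℕ) (v : ℕ), Nat.mem_divisors.mpr ⟨hg1.trans hu, hn0⟩⟩ with hgdef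
    have h1 : (divisorGraph n).Adj u g := by
      refine ⟨fun h => hd (Or.inl ?_), Or.inr hg1⟩
      rw [Subtype.ext_iff] at h
      exact h ▸ hg2
    have h2 : (divisorGraph n).Adj g v := by
      refine ⟨fun h => hd (Or.inr ?_), Or.inl hg2⟩
      rw [Subtype.ext_iff] at h
      exact h ▸ hg1
    let w : (divisorGraph n).Walk u v := .cons h1 (.cons h2 .nil)
    have hlen : w.length = 2 := rfl
    have hle : (divisorGraph n).dist u v ≤ 2 := hlen ▸ SimpleGraph.dist_le w
    have hne0 : (divisorGraph n).dist u v ≠ 0 := by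
      intro h
      rcases SimpleGraph.dist_eq_zero_iff_eq_or_not_reachable.mp h with h' | h'
      · exact hne h'
      · exact h' ⟨w⟩
    have hne1 : (divisorGraph n).dist u v ≠ 1 := by
      intro h
      exact hd (SimpleGraph.dist_eq_one_iff_adj.mp h).2
    have h2' : (divisorGraph n).dist u v = 2 := by omega
    rw [h2']; simp [hev, hd]; norm_num

open Finset in
lemma aux_sym2 {α : Type*} [LinearOrder α] [Fintype α] (f : α → α → ℚ) (F : Sym2 α → ℚ)
    (hF : ∀ a b, F s(a, b) = f a b) (hdiag : ∀ a, f a a = 0) :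
    2 * ∑ e ∈ (Finset.univ : Finset α).sym2, F e = ∑ a, ∑ b, f a b := by
  have hsym : ∀ a b, f a b = f b a := fun a b => by rw [← hF, Sym2.eq_swap, hF]
  have h1 : ∑ e ∈ (Finset.univ : Finset α).sym2, F e
      = ∑ e ∈ (Finset.univ : Finset α).sym2 with ¬ e.IsDiag, F e := by
    refine (Finset.sum_filter_of_ne ?_).symm
    intro e he h0 hd
    induction e using Sym2.ind with
    | _ a b =>
      rw [Sym2.mk_isDiag_iff] at hd
      subst hd
      exact h0 (by rw [hF, hdiag])
  rw [h1, Finset.sum_sym2_filter_not_isDiag]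
  have h2 : ∑ i ∈ (Finset.univ : Finset α).offDiag with i.1 < i.2, F s(i.1, i.2)
      = ∑ i ∈ (Finset.univ : Finset α).offDiag with i.1 < i.2, f i.1 i.2 :=
    Finset.sum_congr rfl fun i _ => hF _ _
  rw [h2]
  have h3 := Finset.sum_filter_add_sum_filter_not (Finset.univ : Finset α).offDiag
    (fun i => i.1 < i.2) (fun i => f i.1 i.2)
  have h4 : ∑ i ∈ (Finset.univ : Finset α).offDiag with ¬ i.1 < i.2, f i.1 i.2
      = ∑ i ∈ (Finset.univ : Finset α).offDiag with i.1 < i.2, f i.1 i.2 := by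
    refine Finset.sum_nbij' Prod.swap Prod.swap ?_ ?_ ?_ ?_ ?_
    · intro a ha
      simp only [Finset.mem_filter, Finset.mem_offDiag] at ha ⊢
      obtain ⟨⟨_, _, hne⟩, hlt⟩ := ha
      exact ⟨⟨by simp, by simp, fun h => hne h.symm⟩, lt_of_le_of_ne (not_lt.mp hlt) (Ne.symm hne)⟩
    · intro a ha
      simp only [Finset.mem_filter, Finset.mem_offDiag] at ha ⊢
      obtain ⟨⟨_, _, hne⟩, hlt⟩ := ha
      exact ⟨⟨by simp, by simp, fun h => hne h.symm⟩, not_lt.mpr hlt.le⟩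
    · intro a _; rfl
    · intro a _; rfl
    · intro a _; exact hsym _ _
  have h5 : ∑ i ∈ (Finset.univ : Finset α).offDiag, f i.1 i.2
      = ∑ i ∈ (Finset.univ : Finset α) ×ˢ (Finset.univ : Finset α), f i.1 i.2 := by
    rw [show (Finset.univ : Finset α).offDiag = ((Finset.univ : Finset α) ×ˢ Finset.univ).filter (fun a => a.1 ≠ a.2) from by ext x; simp]
    refine Finset.sum_filter_of_ne ?_
    intro x _ h0
    intro h
    exact h0 (by rw [show x.1 = x.2 from h, hdiag])
  have h6 : ∑ i ∈ (Finset.univ : Finset α) ×ˢ (Finset.univ : Finset α), f i.1 i.2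
      = ∑ a, ∑ b, f a b := Finset.sum_product _ _ _
  linarith

lemma aux_ite (u v : ℕ) :
    (if u = v then (0 : ℚ) else if (u ∣ v ∨ v ∣ u) then 2 else 6) =
    6 - (if u ∣ v then (4 : ℚ) else 0) - (if v ∣ u then (4 : ℚ) else 0) +
      (if u = v then (2 : ℚ) else 0) := by
  by_cases h : u = v
  · subst h; norm_num
  by_cases h1 : u ∣ v <;> by_cases h2 : v ∣ u <;>
    simp [h, h1, h2] <;> norm_num
  exact absurd (Nat.dvd_antisymm h1 h2) h

/-- The hyper-Wiener index: half the sum of `d(u,v) + d(u,v)^2` over all unordered pairs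
of vertices (pairs `{u,u}` contribute `0`). -/
theorem stmt_8 (k : ℕ) (p : Fin k → ℕ) (hp : ∀ i, (p i).Prime)
    (hinj : Function.Injective p) (n : ℕ) (hn : n = ∏ i, p i) :
    (1 / 2 : ℚ) * ∑ e ∈ (Finset.univ : Finset {d : ℕ // d ∈ n.divisors}).sym2,
      Sym2.lift ⟨fun u v => ((divisorGraph n).dist u v : ℚ) + ((divisorGraph n).dist u v : ℚ) ^ 2,
        fun u v => by beta_reduce; rw [SimpleGraph.dist_comm]⟩ e =
      (2 : ℚ) ^ ((k : ℤ) - 1) * (2 ^ (k + 1) + 2 ^ k + 1) - 2 * 3 ^ k := by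
  have hn0 : n ≠ 0 := by
    rw [hn]
    exact (Finset.prod_pos (fun i _ => (hp i).pos)).ne'
  set V := {d : ℕ // d ∈ n.divisors}
  set g : ℕ → ℕ → ℚ := fun u v =>
    if u = v then (0 : ℚ) else if (u ∣ v ∨ v ∣ u) then 2 else 6 with hg
  have hkey := aux_sym2 (fun u v : V => g (u : ℕ) (v : ℕ))
    (Sym2.lift ⟨fun u v => ((divisorGraph n).dist u v : ℚ) + ((divisorGraph n).dist u v : ℚ) ^ 2,
        fun u v => by beta_reduce; rw [SimpleGraph.dist_comm]⟩)
    (fun a b => by rw [Sym2.lift_mk]; exact aux_dist hn0 a b)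
    (fun a => by simp [hg])
  -- convert the double sum over the subtype to a double sum over divisors
  have hconv : (∑ a : V, ∑ b : V, g (a : ℕ) (b : ℕ))
      = ∑ a ∈ n.divisors, ∑ b ∈ n.divisors, g a b := by
    rw [← Finset.sum_coe_sort n.divisors (fun a => ∑ b ∈ n.divisors, g a b)]
    exact Finset.sum_congr rfl fun a _ =>
      Finset.sum_coe_sort n.divisors (fun b => g (a : ℕ) b)
  -- compute the double sum
  have hT3 : (∑ v ∈ n.divisors, ((v.divisors.card : ℚ))) = 3 ^ k := by
    exact_mod_cast congrArg (Nat.cast : ℕ → ℚ) (aux_T3 hp hinj hn)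
  have hcard : ((n.divisors.card : ℚ)) = 2 ^ k := by
    exact_mod_cast congrArg (Nat.cast : ℕ → ℚ) (aux_card hp hinj hn)
  have hfilter : ∀ v ∈ n.divisors, (n.divisors.filter (· ∣ v)) = v.divisors := fun v hv =>
    Nat.divisors_filter_dvd_of_dvd hn0 (Nat.mem_divisors.mp hv).1
  have hsum1 : ∀ v ∈ n.divisors,
      (∑ u ∈ n.divisors, (if u ∣ v then (4 : ℚ) else 0)) = 4 * (v.divisors.card : ℚ) := by
    intro v hv
    rw [← Finset.sum_filter, hfilter v hv, Finset.sum_const]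
    simp [mul_comm]
  have hS : (∑ a ∈ n.divisors, ∑ b ∈ n.divisors, g a b)
      = 6 * (2 ^ k : ℚ) * 2 ^ k - 4 * 3 ^ k - 4 * 3 ^ k + 2 * 2 ^ k := by
    have hrw : (∑ a ∈ n.divisors, ∑ b ∈ n.divisors, g a b)
        = ∑ a ∈ n.divisors, ∑ b ∈ n.divisors,
          (6 - (if a ∣ b then (4 : ℚ) else 0) - (if b ∣ a then (4 : ℚ) else 0) +
            (if a = b then (2 : ℚ) else 0)) :=
      Finset.sum_congr rfl fun a _ => Finset.sum_congr rfl fun b _ => aux_ite a b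
    rw [hrw]
    have e1 : ∀ a ∈ n.divisors, (∑ b ∈ n.divisors,
        (6 - (if a ∣ b then (4 : ℚ) else 0) - (if b ∣ a then (4 : ℚ) else 0) +
          (if a = b then (2 : ℚ) else 0)))
        = 6 * n.divisors.card - (∑ b ∈ n.divisors, (if a ∣ b then (4 : ℚ) else 0))
          - 4 * (a.divisors.card : ℚ) + 2 := by
      intro a ha
      rw [Finset.sum_add_distrib, Finset.sum_sub_distrib, Finset.sum_sub_distrib,
        Finset.sum_const, hsum1 a ha, Finset.sum_ite_eq n.divisors a (fun _ => (2 : ℚ)),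
        if_pos ha]
      ring
    rw [Finset.sum_congr rfl e1]
    rw [Finset.sum_add_distrib, Finset.sum_sub_distrib, Finset.sum_sub_distrib]
    rw [Finset.sum_comm (s := n.divisors) (t := n.divisors)
      (f := fun a b => (if a ∣ b then (4 : ℚ) else 0))]
    rw [Finset.sum_congr rfl hsum1]
    rw [← Finset.mul_sum, ← Finset.mul_sum, hT3, Finset.sum_const, Finset.sum_const]
    simp only [nsmul_eq_mul]
    rw [hcard]
    ring
  rw [hconv, hS] at hkey
  have hz : (2 : ℚ) ^ ((k : ℤ) - 1) = 2 ^ k / 2 := by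
    rw [zpow_sub₀ (by norm_num : (2 : ℚ) ≠ 0), zpow_natCast, zpow_one]
  rw [hz, pow_succ]
  linarith
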